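/- Assume moreover C_γ > C_α > 0 and 0 < C_R ≤ C_γ − C_α, and set 𝔊 := (1/2)^{C_δ/(C_γ−C_α)}·(1 − (2/3)^{(C_β+C_δ)/(C_γ−C_α)}) + (2/3)^{(C_β+C_δ)/(C_γ−C_α)}. Then 𝔊 < 1 and K²𝟏(x₀) ≤ 𝔊·(C_β/(C_β+C_δ))². -/

import Mathlib

open MeasureTheory

/-- Birth rate in the allometric setting with `β = α−1`: `b(x) = C_β x^{α−1}` for
`x > x₀` and `0` otherwise. -/
noncomputable def birthRate (x₀ Cβ α : ℝ) (x : ℝ) : ℝ :=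
  if x₀ < x then Cβ * x ^ (α - 1) else 0

/-- Death rate `d(x) = C_δ x^{α−1}`. -/
noncomputable def deathRate (Cδ α : ℝ) (x : ℝ) : ℝ := Cδ * x ^ (α - 1)

/-- Net energy gain `g(x) = C_R x^α`. -/
noncomputable def energyGain (CR α : ℝ) (x : ℝ) : ℝ := CR * x ^ α

/-- The operator `K`:
`K f(ξ) = ∫_ξ^∞ (b(x)/g(x)) exp(−∫_ξ^x (b+d)/g) f(x−x₀) dx`. -/
noncomputable def Kop (x₀ Cβ Cδ CR α : ℝ) (f : ℝ → ℝ) (ξ : ℝ) : ℝ :=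
  ∫ x in Set.Ioi ξ,
    birthRate x₀ Cβ α x / energyGain CR α x *
      Real.exp
        (-(∫ τ in ξ..x,
            (birthRate x₀ Cβ α τ + deathRate Cδ α τ) / energyGain CR α τ)) *
      f (x - x₀)

open Real Set

section auxiliaryLemmas

variable {x₀ Cβ Cδ CR α : ℝ}

private lemma bdg_low (hCR : 0 < CR) {τ : ℝ} (hτ : 0 < τ) (hτx : τ ≤ x₀) :
    (birthRate x₀ Cβ α τ + deathRate Cδ α τ) / energyGain CR α τ = (Cδ / CR) * τ⁻¹ := by
  have hpow := (Real.rpow_pos_of_pos hτ α).ne'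
  unfold birthRate deathRate energyGain
  rw [if_neg (by linarith), Real.rpow_sub hτ, Real.rpow_one]
  field_simp
  ring

private lemma bdg_high (hCR : 0 < CR) {τ : ℝ} (hτ0 : 0 < τ) (hτx : x₀ < τ) :
    (birthRate x₀ Cβ α τ + deathRate Cδ α τ) / energyGain CR α τ = ((Cβ + Cδ) / CR) * τ⁻¹ := by
  have hpow := (Real.rpow_pos_of_pos hτ0 α).ne'
  unfold birthRate deathRate energyGain
  rw [if_pos hτx, Real.rpow_sub hτ0, Real.rpow_one]
  field_simp

private lemma bg_high (hCR : 0 < CR) {x : ℝ} (hx0 : 0 < x) (hx : x₀ < x) :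
    birthRate x₀ Cβ α x / energyGain CR α x = (Cβ / CR) * x⁻¹ := by
  have hpow := (Real.rpow_pos_of_pos hx0 α).ne'
  unfold birthRate energyGain
  rw [if_pos hx, Real.rpow_sub hx0, Real.rpow_one]
  field_simp

private lemma intInt_high (hCR : 0 < CR) (hx₀ : 0 < x₀) {y x : ℝ} (hy : x₀ ≤ y) (hx : y ≤ x) :
    IntervalIntegrable (fun τ => (birthRate x₀ Cβ α τ + deathRate Cδ α τ) / energyGain CR α τ)
        volume y x ∧
    (∫ τ in y..x, (birthRate x₀ Cβ α τ + deathRate Cδ α τ) / energyGain CR α τ)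
      = ((Cβ + Cδ) / CR) * (Real.log x - Real.log y) := by
  have hy0 : 0 < y := lt_of_lt_of_le hx₀ hy
  have hx0 : 0 < x := lt_of_lt_of_le hy0 hx
  have key : EqOn (fun τ => (birthRate x₀ Cβ α τ + deathRate Cδ α τ) / energyGain CR α τ)
      (fun τ => ((Cβ + Cδ) / CR) * τ⁻¹) (Ioc y x) := by
    intro τ hτ
    exact bdg_high hCR (hy0.trans hτ.1) (lt_of_le_of_lt hy hτ.1)
  have hnz : ∀ t : ℝ, t ∈ Set.uIcc y x → t ≠ 0 := by
    intro t ht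
    rw [uIcc_of_le hx] at ht
    exact (hy0.trans_le ht.1).ne'
  have hii : IntervalIntegrable (fun τ : ℝ => ((Cβ + Cδ) / CR) * τ⁻¹) volume y x :=
    (intervalIntegral.intervalIntegrable_inv hnz continuousOn_id).const_mul _
  have hi2 : IntegrableOn (fun τ => (birthRate x₀ Cβ α τ + deathRate Cδ α τ) / energyGain CR α τ)
      (Ioc y x) volume :=
    (hii.1).congr_fun key.symm measurableSet_Ioc
  constructor
  · exact (intervalIntegrable_iff_integrableOn_Ioc_of_le hx).mpr hi2
  · rw [intervalIntegral.integral_of_le hx, setIntegral_congr_fun measurableSet_Ioc key,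
      ← intervalIntegral.integral_of_le hx, intervalIntegral.integral_const_mul,
      integral_inv_of_pos hy0 hx0, Real.log_div hx0.ne' hy0.ne']

private lemma intInt_low (hCR : 0 < CR) (hx₀ : 0 < x₀) {y : ℝ} (hy0 : 0 < y) (hy : y ≤ x₀) :
    IntervalIntegrable (fun τ => (birthRate x₀ Cβ α τ + deathRate Cδ α τ) / energyGain CR α τ)
        volume y x₀ ∧
    (∫ τ in y..x₀, (birthRate x₀ Cβ α τ + deathRate Cδ α τ) / energyGain CR α τ)
      = (Cδ / CR) * (Real.log x₀ - Real.log y) := by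
  have key : EqOn (fun τ => (birthRate x₀ Cβ α τ + deathRate Cδ α τ) / energyGain CR α τ)
      (fun τ => (Cδ / CR) * τ⁻¹) (Ioc y x₀) := by
    intro τ hτ
    exact bdg_low hCR (hy0.trans hτ.1) hτ.2
  have hnz : ∀ t : ℝ, t ∈ Set.uIcc y x₀ → t ≠ 0 := by
    intro t ht
    rw [uIcc_of_le hy] at ht
    exact (hy0.trans_le ht.1).ne'
  have hii : IntervalIntegrable (fun τ : ℝ => (Cδ / CR) * τ⁻¹) volume y x₀ :=
    (intervalIntegral.intervalIntegrable_inv hnz continuousOn_id).const_mul _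
  have hi2 : IntegrableOn (fun τ => (birthRate x₀ Cβ α τ + deathRate Cδ α τ) / energyGain CR α τ)
      (Ioc y x₀) volume :=
    (hii.1).congr_fun key.symm measurableSet_Ioc
  constructor
  · exact (intervalIntegrable_iff_integrableOn_Ioc_of_le hy).mpr hi2
  · rw [intervalIntegral.integral_of_le hy, setIntegral_congr_fun measurableSet_Ioc key,
      ← intervalIntegral.integral_of_le hy, intervalIntegral.integral_const_mul,
      integral_inv_of_pos hy0 hx₀, Real.log_div hx₀.ne' hy0.ne']

private lemma exp_inner (hCR : 0 < CR) (hx₀ : 0 < x₀) {y x : ℝ} (hy0 : 0 < y) (hy : y ≤ x₀)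
    (hx : x₀ ≤ x) :
    Real.exp (-(∫ τ in y..x, (birthRate x₀ Cβ α τ + deathRate Cδ α τ) / energyGain CR α τ))
      = (y / x₀) ^ (Cδ / CR) * x₀ ^ ((Cβ + Cδ) / CR) * x ^ (-((Cβ + Cδ) / CR)) := by
  have hx0 : 0 < x := hx₀.trans_le hx
  obtain ⟨i1, e1⟩ := intInt_low (Cβ := Cβ) (α := α) hCR hx₀ hy0 hy
  obtain ⟨i2, e2⟩ := intInt_high hCR hx₀ (le_refl x₀) hx
  rw [← intervalIntegral.integral_add_adjacent_intervals i1 i2, e1, e2,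
    Real.rpow_def_of_pos (div_pos hy0 hx₀), Real.rpow_def_of_pos hx₀,
    Real.rpow_def_of_pos hx0, ← Real.exp_add, ← Real.exp_add, Real.log_div hy0.ne' hx₀.ne']
  ring_nf

private lemma Kop_eq (hCR : 0 < CR) (hx₀ : 0 < x₀) {y : ℝ} (hy0 : 0 < y) (hy : y ≤ x₀)
    (f : ℝ → ℝ) :
    Kop x₀ Cβ Cδ CR α f y
      = ∫ x in Ioi x₀,
          (Cβ / CR) * (y / x₀) ^ (Cδ / CR) * x₀ ^ ((Cβ + Cδ) / CR)
            * x ^ (-((Cβ + Cδ) / CR) - 1) * f (x - x₀) := by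
  unfold Kop
  rw [setIntegral_eq_of_subset_of_forall_diff_eq_zero measurableSet_Ioi (Ioi_subset_Ioi hy)
    (fun x hx => by
      simp only [mem_diff, mem_Ioi, not_lt] at hx
      simp [birthRate, if_neg (not_lt.mpr hx.2)])]
  refine setIntegral_congr_fun measurableSet_Ioi (fun x hx => ?_)
  have hx' : x₀ < x := hx
  have hx0 : 0 < x := hx₀.trans hx'
  rw [bg_high hCR hx0 hx', exp_inner hCR hx₀ hy0 hy hx'.le,
    Real.rpow_sub hx0, Real.rpow_one]
  ring

private lemma Kop_eq_high (hCR : 0 < CR) (hx₀ : 0 < x₀) {y : ℝ} (hy : x₀ ≤ y) (f : ℝ → ℝ) :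
    Kop x₀ Cβ Cδ CR α f y
      = ∫ x in Ioi y,
          (Cβ / CR) * y ^ ((Cβ + Cδ) / CR) * x ^ (-((Cβ + Cδ) / CR) - 1) * f (x - x₀) := by
  have hy0 : 0 < y := hx₀.trans_le hy
  unfold Kop
  refine setIntegral_congr_fun measurableSet_Ioi (fun x hx => ?_)
  have hx' : y < x := hx
  have hx0 : 0 < x := hy0.trans hx'
  rw [bg_high hCR hx0 (hy.trans_lt hx'), (intInt_high hCR hx₀ hy hx'.le).2,
    Real.rpow_sub hx0, Real.rpow_one]
  have he : Real.exp (-((Cβ + Cδ) / CR * (Real.log x - Real.log y)))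
      = y ^ ((Cβ + Cδ) / CR) * x ^ (-((Cβ + Cδ) / CR)) := by
    rw [Real.rpow_def_of_pos hy0, Real.rpow_def_of_pos hx0, ← Real.exp_add]
    congr 1
    ring
  rw [he]
  ring

private lemma hval_aux (P A u V q θ : ℝ) (hθ : θ ≠ 0) (hxx : P * A = 1) :
    q * θ * P * (q * u) * ((V * A - A) / (-θ)) + q * θ * P * q * (V * A / θ)
      = (u * (1 - V) + V) * q ^ 2 := by
  have h1 : (V * A - A) / (-θ) = (A - V * A) / θ := by
    rw [div_neg, ← neg_div, neg_sub]
  rw [h1]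
  field_simp
  linear_combination (q ^ 2 * u - q ^ 2 * u * V + q ^ 2 * V) * hxx

private lemma int_Ioi_rpow (θ : ℝ) (hθ : 0 < θ) {c : ℝ} (hc : 0 < c) :
    ∫ x in Ioi c, x ^ (-θ - 1) = c ^ (-θ) / θ := by
  rw [integral_Ioi_rpow_of_lt (by linarith) hc, show -θ - 1 + 1 = -θ by ring]
  field_simp

private lemma K_one_low (hCβ : 0 < Cβ) (hCδ : 0 < Cδ) (hCR : 0 < CR) (hx₀ : 0 < x₀)
    {y : ℝ} (hy0 : 0 < y) (hy : y ≤ x₀) :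
    Kop x₀ Cβ Cδ CR α (fun _ => 1) y = Cβ / (Cβ + Cδ) * (y / x₀) ^ (Cδ / CR) := by
  have hθ : 0 < (Cβ + Cδ) / CR := div_pos (by linarith) hCR
  rw [Kop_eq hCR hx₀ hy0 hy]
  simp only [mul_one]
  rw [MeasureTheory.integral_const_mul, int_Ioi_rpow _ hθ hx₀]
  have h1 : (0:ℝ) < x₀ ^ ((Cβ + Cδ) / CR) := Real.rpow_pos_of_pos hx₀ _
  rw [Real.rpow_neg hx₀.le]
  field_simp

private lemma K_one_high (hCβ : 0 < Cβ) (hCδ : 0 < Cδ) (hCR : 0 < CR) (hx₀ : 0 < x₀)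
    {y : ℝ} (hy : x₀ ≤ y) :
    Kop x₀ Cβ Cδ CR α (fun _ => 1) y = Cβ / (Cβ + Cδ) := by
  have hy0 : 0 < y := hx₀.trans_le hy
  have hθ : 0 < (Cβ + Cδ) / CR := div_pos (by linarith) hCR
  rw [Kop_eq_high hCR hx₀ hy]
  simp only [mul_one]
  rw [MeasureTheory.integral_const_mul, int_Ioi_rpow _ hθ hy0]
  have h1 : (0:ℝ) < y ^ ((Cβ + Cδ) / CR) := Real.rpow_pos_of_pos hy0 _
  rw [Real.rpow_neg hy0.le]
  field_simp

end auxiliaryLemmas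

/-- Lemma 6.18, second part: with `C_γ > C_α > 0` and `0 < C_R ≤ C_γ − C_α`, setting
`𝔊 := (1/2)^{C_δ/(C_γ−C_α)}(1 − (2/3)^{(C_β+C_δ)/(C_γ−C_α)}) + (2/3)^{(C_β+C_δ)/(C_γ−C_α)}`,
one has `𝔊 < 1` and `K²𝟏(x₀) ≤ 𝔊 (C_β/(C_β+C_δ))²`. -/
theorem stmt13 (α x₀ Cβ Cδ CR Cγ Cα : ℝ)
    (hα0 : 0 < α) (hα1 : α ≤ 1) (hx₀ : 0 < x₀)
    (hCβ : 0 < Cβ) (hCδ : 0 < Cδ) (hCR : 0 < CR)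
    (hCα : 0 < Cα) (hCγ : Cα < Cγ) (hCRle : CR ≤ Cγ - Cα) :
    ((1 / 2 : ℝ) ^ (Cδ / (Cγ - Cα)) * (1 - (2 / 3 : ℝ) ^ ((Cβ + Cδ) / (Cγ - Cα))) +
          (2 / 3 : ℝ) ^ ((Cβ + Cδ) / (Cγ - Cα)) < 1) ∧
      (Kop x₀ Cβ Cδ CR α)^[2] (fun _ => 1) x₀ ≤
        ((1 / 2 : ℝ) ^ (Cδ / (Cγ - Cα)) * (1 - (2 / 3 : ℝ) ^ ((Cβ + Cδ) / (Cγ - Cα))) +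
            (2 / 3 : ℝ) ^ ((Cβ + Cδ) / (Cγ - Cα))) *
          (Cβ / (Cβ + Cδ)) ^ 2 := by
  classical
  have hγα : 0 < Cγ - Cα := by linarith
  set σ : ℝ := Cδ / CR with hσdef
  set θ : ℝ := (Cβ + Cδ) / CR with hθdef
  have hσ : 0 < σ := div_pos hCδ hCR
  have hθ : 0 < θ := div_pos (by linarith) hCR
  set q : ℝ := Cβ / (Cβ + Cδ) with hqdef
  have hq0 : 0 < q := div_pos hCβ (by linarith)
  -- the primed constants
  have hp'1 : (1 / 2 : ℝ) ^ (Cδ / (Cγ - Cα)) < 1 :=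
    Real.rpow_lt_one (by norm_num) (by norm_num) (div_pos hCδ hγα)
  have hv'1 : (2 / 3 : ℝ) ^ ((Cβ + Cδ) / (Cγ - Cα)) < 1 :=
    Real.rpow_lt_one (by norm_num) (by norm_num) (div_pos (by linarith) hγα)
  have hp'0 : (0:ℝ) ≤ (1 / 2 : ℝ) ^ (Cδ / (Cγ - Cα)) := Real.rpow_nonneg (by norm_num) _
  have hv'0 : (0:ℝ) ≤ (2 / 3 : ℝ) ^ ((Cβ + Cδ) / (Cγ - Cα)) := Real.rpow_nonneg (by norm_num) _
  refine ⟨by linarith [mul_pos (sub_pos.2 hp'1) (sub_pos.2 hv'1)], ?_⟩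
  -- unprimed constants and their comparison with the primed ones
  have hu0 : (0:ℝ) ≤ (1 / 2 : ℝ) ^ σ := Real.rpow_nonneg (by norm_num) _
  have hv1 : (2 / 3 : ℝ) ^ θ ≤ 1 :=
    Real.rpow_le_one (by norm_num) (by norm_num) hθ.le
  have hσ'σ : Cδ / (Cγ - Cα) ≤ σ := div_le_div_of_nonneg_left hCδ.le hCR hCRle
  have hθ'θ : (Cβ + Cδ) / (Cγ - Cα) ≤ θ := div_le_div_of_nonneg_left (by linarith) hCR hCRle
  have hup' : (1 / 2 : ℝ) ^ σ ≤ (1 / 2 : ℝ) ^ (Cδ / (Cγ - Cα)) :=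
    Real.rpow_le_rpow_of_exponent_ge (by norm_num) (by norm_num) hσ'σ
  have hvv' : (2 / 3 : ℝ) ^ θ ≤ (2 / 3 : ℝ) ^ ((Cβ + Cδ) / (Cγ - Cα)) :=
    Real.rpow_le_rpow_of_exponent_ge (by norm_num) (by norm_num) hθ'θ
  -- rewrite the iterate
  have h2 : (Kop x₀ Cβ Cδ CR α)^[2] (fun _ => 1) x₀
      = Kop x₀ Cβ Cδ CR α (Kop x₀ Cβ Cδ CR α (fun _ => 1)) x₀ := rfl
  rw [h2, Kop_eq hCR hx₀ hx₀ le_rfl]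
  simp only [div_self hx₀.ne', Real.one_rpow, mul_one]
  -- the majorant
  set a : ℝ := 3 / 2 * x₀ with hadef
  have hx₀a : x₀ ≤ a := by rw [hadef]; linarith
  have ha0 : 0 < a := hx₀.trans_le hx₀a
  set g : ℝ → ℝ := fun x =>
    Cβ / CR * x₀ ^ θ * x ^ (-θ - 1) * (q * (if x ≤ a then (1 / 2 : ℝ) ^ σ else 1)) with hgdef
  have hdecomp : Ioi x₀ = Ioc x₀ a ∪ Ioi a := (Ioc_union_Ioi_eq_Ioi hx₀a).symm
  have hint1 : IntegrableOn g (Ioc x₀ a) := by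
    have base : IntegrableOn
        (fun x : ℝ => Cβ / CR * x₀ ^ θ * (q * (1 / 2 : ℝ) ^ σ) * x ^ (-θ - 1)) (Ioc x₀ a) :=
      ((integrableOn_Ioi_rpow_of_lt (by linarith : -θ - 1 < -1) hx₀).mono_set
        Ioc_subset_Ioi_self).const_mul _
    refine base.congr_fun (fun x hx => ?_) measurableSet_Ioc
    simp only [hgdef, if_pos hx.2]
    ring
  have hint2 : IntegrableOn g (Ioi a) := by
    have base : IntegrableOn
        (fun x : ℝ => Cβ / CR * x₀ ^ θ * q * x ^ (-θ - 1)) (Ioi a) :=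
      (integrableOn_Ioi_rpow_of_lt (by linarith : -θ - 1 < -1) ha0).const_mul _
    refine base.congr_fun (fun x hx => ?_) measurableSet_Ioi
    simp only [hgdef, if_neg (not_le.mpr (mem_Ioi.mp hx))]
    ring
  have hgint : IntegrableOn g (Ioi x₀) := by
    rw [hdecomp]
    exact hint1.union hint2
  -- pointwise bounds
  have hK1nonneg : ∀ z : ℝ, 0 < z → 0 ≤ Kop x₀ Cβ Cδ CR α (fun _ => 1) z := by
    intro z hz
    rcases le_or_gt z x₀ with h | h
    · rw [K_one_low hCβ hCδ hCR hx₀ hz h]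
      positivity
    · rw [K_one_high hCβ hCδ hCR hx₀ h.le]
      positivity
  have hK1le : ∀ z : ℝ, 0 < z → Kop x₀ Cβ Cδ CR α (fun _ => 1) z ≤ q := by
    intro z hz
    rcases le_or_gt z x₀ with h | h
    · rw [K_one_low hCβ hCδ hCR hx₀ hz h]
      have : (z / x₀) ^ σ ≤ 1 :=
        Real.rpow_le_one (by positivity) (by rw [div_le_one hx₀]; exact h) hσ.le
      calc q * (z / x₀) ^ σ ≤ q * 1 := by
            exact mul_le_mul_of_nonneg_left this hq0.le
        _ = q := mul_one q
    · rw [K_one_high hCβ hCδ hCR hx₀ h.le]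
  -- the comparison of the integrals
  have hratio : ∀ x : ℝ, x ∈ Ioi x₀ →
      Cβ / CR * x₀ ^ θ * x ^ (-θ - 1) * Kop x₀ Cβ Cδ CR α (fun _ => 1) (x - x₀) ≤ g x := by
    intro x hx
    have hx' : x₀ < x := hx
    have hx0 : 0 < x := hx₀.trans hx'
    have hz : 0 < x - x₀ := by linarith
    have hc0 : 0 ≤ Cβ / CR * x₀ ^ θ * x ^ (-θ - 1) := by positivity
    rw [hgdef]
    refine mul_le_mul_of_nonneg_left ?_ hc0
    by_cases hxa : x ≤ a
    · rw [if_pos hxa, K_one_low hCβ hCδ hCR hx₀ hz (by rw [hadef] at hxa; linarith)]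
      refine mul_le_mul_of_nonneg_left ?_ hq0.le
      refine Real.rpow_le_rpow (by positivity) ?_ hσ.le
      rw [div_le_div_iff₀ hx₀ (by norm_num : (0:ℝ) < 2)]
      rw [hadef] at hxa
      linarith
    · rw [if_neg hxa, mul_one]
      exact hK1le _ hz
  have hmono : (∫ x in Ioi x₀,
        Cβ / CR * x₀ ^ θ * x ^ (-θ - 1) * Kop x₀ Cβ Cδ CR α (fun _ => 1) (x - x₀))
      ≤ ∫ x in Ioi x₀, g x := by
    refine integral_mono_of_nonneg ?_ hgint ?_
    · filter_upwards [ae_restrict_mem measurableSet_Ioi] with x hx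
      have hx' : x₀ < x := hx
      have hx0 : 0 < x := hx₀.trans hx'
      have hz : 0 < x - x₀ := by linarith
      exact mul_nonneg (by positivity) (hK1nonneg _ hz)
    · filter_upwards [ae_restrict_mem measurableSet_Ioi] with x hx
      exact hratio x hx
  refine le_trans hmono ?_
  -- computation of the majorant integral
  have hIoc : ∫ x in Ioc x₀ a, g x
      = Cβ / CR * x₀ ^ θ * (q * (1 / 2 : ℝ) ^ σ)
          * ((a ^ (-θ) - x₀ ^ (-θ)) / (-θ)) := by
    rw [setIntegral_congr_fun measurableSet_Ioc
      (fun x hx => by rw [hgdef]; simp only [if_pos hx.2]; ring :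
        EqOn g (fun x => Cβ / CR * x₀ ^ θ * (q * (1 / 2 : ℝ) ^ σ) * x ^ (-θ - 1)) (Ioc x₀ a)),
      ← intervalIntegral.integral_of_le hx₀a, intervalIntegral.integral_const_mul,
      integral_rpow (Or.inr ⟨by linarith, Set.notMem_uIcc_of_lt hx₀ ha0⟩),
      show -θ - 1 + 1 = -θ by ring]
  have hIoi : ∫ x in Ioi a, g x
      = Cβ / CR * x₀ ^ θ * q * (a ^ (-θ) / θ) := by
    rw [setIntegral_congr_fun measurableSet_Ioi
      (fun x hx => by
        rw [hgdef]; simp only [if_neg (not_le.mpr (mem_Ioi.mp hx))]; ring :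
        EqOn g (fun x => Cβ / CR * x₀ ^ θ * q * x ^ (-θ - 1)) (Ioi a)),
      MeasureTheory.integral_const_mul, int_Ioi_rpow _ hθ ha0]
  have hsplit : ∫ x in Ioi x₀, g x
      = Cβ / CR * x₀ ^ θ * (q * (1 / 2 : ℝ) ^ σ) * ((a ^ (-θ) - x₀ ^ (-θ)) / (-θ))
        + Cβ / CR * x₀ ^ θ * q * (a ^ (-θ) / θ) := by
    rw [hdecomp, setIntegral_union (Ioc_disjoint_Ioi le_rfl) measurableSet_Ioi hint1 hint2,
      hIoc, hIoi]
  rw [hsplit]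
  -- identify the value
  have h23 : (2 / 3 : ℝ) ^ θ = (3 / 2 : ℝ) ^ (-θ) := by
    rw [show (2 / 3 : ℝ) = ((3:ℝ) / 2)⁻¹ by norm_num, Real.rpow_neg (by norm_num),
      Real.inv_rpow (by norm_num)]
  have hax : a ^ (-θ) = (2 / 3 : ℝ) ^ θ * x₀ ^ (-θ) := by
    rw [hadef, Real.mul_rpow (by norm_num) hx₀.le, h23]
  have hxx : x₀ ^ θ * x₀ ^ (-θ) = 1 := by
    rw [← Real.rpow_add hx₀, add_neg_cancel, Real.rpow_zero]
  have hval : Cβ / CR * x₀ ^ θ * (q * (1 / 2 : ℝ) ^ σ) * ((a ^ (-θ) - x₀ ^ (-θ)) / (-θ))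
        + Cβ / CR * x₀ ^ θ * q * (a ^ (-θ) / θ)
      = ((1 / 2 : ℝ) ^ σ * (1 - (2 / 3 : ℝ) ^ θ) + (2 / 3 : ℝ) ^ θ) * q ^ 2 := by
    have hCβCR : Cβ / CR = q * θ := by
      rw [hqdef, hθdef]
      field_simp
    rw [hax, hCβCR]
    exact hval_aux _ _ _ _ _ _ hθ.ne' hxx
  -- final comparison
  have hq2 : (0:ℝ) ≤ q ^ 2 := sq_nonneg q
  have hfinal : (1 / 2 : ℝ) ^ σ * (1 - (2 / 3 : ℝ) ^ θ) + (2 / 3 : ℝ) ^ θ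
      ≤ (1 / 2 : ℝ) ^ (Cδ / (Cγ - Cα)) * (1 - (2 / 3 : ℝ) ^ ((Cβ + Cδ) / (Cγ - Cα)))
        + (2 / 3 : ℝ) ^ ((Cβ + Cδ) / (Cγ - Cα)) := by
    linarith [mul_nonneg (sub_nonneg.2 hup') (sub_nonneg.2 hv1),
      mul_nonneg (sub_nonneg.2 hvv') (sub_nonneg.2 hp'1.le)]
  have := mul_le_mul_of_nonneg_right hfinal hq2
  calc Cβ / CR * x₀ ^ θ * (q * (1 / 2 : ℝ) ^ σ) * ((a ^ (-θ) - x₀ ^ (-θ)) / (-θ))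
        + Cβ / CR * x₀ ^ θ * q * (a ^ (-θ) / θ) ≤ _ := le_of_eq hval
    _ ≤ _ := this
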